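/- Let r ≥ 1, let n_1, ..., n_r be natural numbers with n_1 + ... + n_r ≥ 1, let σ_2, ..., σ_r be positive real numbers, and define v(x) = x^{n_1} · ∏_{i=2}^{r} (x + σ_i)^{n_i}. Let κ_1 > 0 and define, for s > 0, α(s) = (2n_1 + 2) · e^{κ_1 s} · v(s)^{-1} · ∫_0^s e^{-κ_1 x} v(x) dx. Then ∫_1^∞ α(x)^{-1/2} dx converges (is finite). -/

import Mathlib

open MeasureTheory Set Real

/-- Incompleteness in the steady case with `κ₁ > 0`: the coefficient `α` of (3.21)
grows exponentially, so the geodesic distance `∫ α^{-1/2}` is finite, i.e.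
`x ↦ α(x)^{-1/2}` is integrable on `(1,∞)`. -/
theorem stmt_18 (r : ℕ) (hr : 1 ≤ r) (n : ℕ → ℕ)
    (hn : 1 ≤ ∑ i ∈ Finset.Icc 1 r, n i)
    (σ : ℕ → ℝ) (hσ : ∀ i ∈ Finset.Icc 2 r, 0 < σ i)
    (v : ℝ → ℝ) (hv : ∀ x, v x = x ^ n 1 * ∏ i ∈ Finset.Icc 2 r, (x + σ i) ^ n i)
    (κ1 : ℝ) (hκ1 : 0 < κ1)
    (α : ℝ → ℝ)
    (hα : ∀ s, α s = (2 * (n 1 : ℝ) + 2) * Real.exp (κ1 * s) * (v s)⁻¹ *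
      ∫ x in (0:ℝ)..s, Real.exp (-κ1 * x) * v x) :
    MeasureTheory.IntegrableOn (fun x => 1 / Real.sqrt (α x)) (Set.Ioi (1:ℝ)) := by
  -- basic data
  set C : ℝ := ∏ i ∈ Finset.Icc 2 r, (1 + σ i) ^ n i with hCdef
  have hC : 0 < C :=
    Finset.prod_pos fun i hi => pow_pos (by linarith [hσ i hi]) _
  set N : ℕ := n 1 + ∑ i ∈ Finset.Icc 2 r, n i with hNdef
  have hc0 : (0:ℝ) < 2 * (n 1 : ℝ) + 2 := by positivity
  -- continuity of v
  have hvc : Continuous v := by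
    have : Continuous fun x : ℝ =>
        x ^ n 1 * ∏ i ∈ Finset.Icc 2 r, (x + σ i) ^ n i := by
      apply Continuous.mul (continuous_pow _)
      exact continuous_finset_prod _ fun i _ => (continuous_id.add continuous_const).pow _
    exact this.congr fun x => (hv x).symm
  have hvpos : ∀ x : ℝ, 0 < x → 0 < v x := by
    intro x hx
    rw [hv]
    exact mul_pos (pow_pos hx _)
      (Finset.prod_pos fun i hi => pow_pos (by linarith [hσ i hi]) _)
  -- the integrand of the primitive
  have hintc : Continuous fun x : ℝ => Real.exp (-κ1 * x) * v x :=
    (Real.continuous_exp.comp (continuous_const.mul continuous_id)).mul hvc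
  set I : ℝ := ∫ x in (0:ℝ)..1, Real.exp (-κ1 * x) * v x with hIdef
  have hI : 0 < I := by
    apply intervalIntegral.intervalIntegral_pos_of_pos_on
      (hintc.intervalIntegrable 0 1)
    · intro x hx
      exact mul_pos (Real.exp_pos _) (hvpos x hx.1)
    · norm_num
  -- lower bound on the primitive, for s ≥ 1
  have hJge : ∀ s : ℝ, 1 ≤ s → I ≤ ∫ x in (0:ℝ)..s, Real.exp (-κ1 * x) * v x := by
    intro s hs
    have hsplit : (∫ x in (0:ℝ)..1, Real.exp (-κ1 * x) * v x) +
        (∫ x in (1:ℝ)..s, Real.exp (-κ1 * x) * v x) =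
        ∫ x in (0:ℝ)..s, Real.exp (-κ1 * x) * v x :=
      intervalIntegral.integral_add_adjacent_intervals
        (hintc.intervalIntegrable 0 1) (hintc.intervalIntegrable 1 s)
    have h2 : 0 ≤ ∫ x in (1:ℝ)..s, Real.exp (-κ1 * x) * v x := by
      apply intervalIntegral.integral_nonneg hs
      intro x hx
      exact le_of_lt (mul_pos (Real.exp_pos _) (hvpos x (by linarith [hx.1])))
    linarith [hsplit]
  -- upper bound on v, for s ≥ 1
  have hvle : ∀ s : ℝ, 1 ≤ s → v s ≤ C * s ^ N := by
    intro s hs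
    rw [hv, hNdef, pow_add]
    have : ∏ i ∈ Finset.Icc 2 r, (s + σ i) ^ n i ≤
        ∏ i ∈ Finset.Icc 2 r, (s * (1 + σ i)) ^ n i := by
      apply Finset.prod_le_prod
      · intro i hi
        exact pow_nonneg (by linarith [hσ i hi]) _
      · intro i hi
        apply pow_le_pow_left₀ (by linarith [hσ i hi])
        nlinarith [hσ i hi]
    calc s ^ n 1 * ∏ i ∈ Finset.Icc 2 r, (s + σ i) ^ n i
        ≤ s ^ n 1 * ∏ i ∈ Finset.Icc 2 r, (s * (1 + σ i)) ^ n i := by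
          apply mul_le_mul_of_nonneg_left this (pow_nonneg (by linarith) _)
      _ = C * (s ^ n 1 * s ^ ∑ i ∈ Finset.Icc 2 r, n i) := by
          simp_rw [mul_pow, Finset.prod_mul_distrib, Finset.prod_pow_eq_pow_sum]
          ring
  -- lower bound for α
  have hαlb : ∀ s : ℝ, 1 < s →
      (2 * (n 1 : ℝ) + 2) * Real.exp (κ1 * s) * (C * s ^ N)⁻¹ * I ≤ α s := by
    intro s hs
    have hs0 : (0:ℝ) < s := by linarith
    have hvs : 0 < v s := hvpos s hs0
    have hCs : (0:ℝ) < C * s ^ N := by positivity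
    rw [hα]
    have hinv : (C * s ^ N)⁻¹ ≤ (v s)⁻¹ :=
      inv_anti₀ hvs (hvle s hs.le)
    have hJ : I ≤ ∫ x in (0:ℝ)..s, Real.exp (-κ1 * x) * v x := hJge s hs.le
    have h1 : 0 ≤ (2 * (n 1 : ℝ) + 2) * Real.exp (κ1 * s) := by positivity
    have := mul_le_mul (mul_le_mul_of_nonneg_left hinv h1) hJ hI.le
      (by positivity)
    exact this
  -- measurability
  have hprim : Continuous fun s : ℝ => ∫ x in (0:ℝ)..s, Real.exp (-κ1 * x) * v x :=
    intervalIntegral.continuous_primitive (fun a b => hintc.intervalIntegrable a b) 0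
  have hαm : Measurable α := by
    have hfun : α = fun s => (2 * (n 1 : ℝ) + 2) * Real.exp (κ1 * s) * (v s)⁻¹ *
        ∫ x in (0:ℝ)..s, Real.exp (-κ1 * x) * v x := funext hα
    rw [hfun]
    exact ((measurable_const.mul
      ((Real.continuous_exp.comp (continuous_const.mul continuous_id)).measurable)).mul
      (hvc.measurable.inv)).mul hprim.measurable
  have hfm : Measurable fun x => 1 / Real.sqrt (α x) :=
    measurable_const.div (Real.continuous_sqrt.measurable.comp hαm)
  -- the dominating function
  set K : ℝ := Real.sqrt (C / ((2 * (n 1 : ℝ) + 2) * I)) with hKdef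
  have hg : IntegrableOn
      (fun x : ℝ => K * (x ^ ((N : ℝ) / 2) * Real.exp (-(κ1 / 2) * x)))
      (Set.Ioi (1:ℝ)) := by
    have h0 : IntegrableOn
        (fun x : ℝ => x ^ ((N : ℝ) / 2) * Real.exp (-(κ1 / 2) * x))
        (Set.Ioi (0:ℝ)) := by
      have := integrableOn_rpow_mul_exp_neg_mul_rpow
        (s := (N : ℝ) / 2) (p := 1) (b := κ1 / 2)
        (by
          have h : (0:ℝ) ≤ (N:ℝ)/2 := by positivity
          linarith) zero_lt_one (by positivity)
      simpa using this
    exact ((h0.mono_set (Set.Ioi_subset_Ioi zero_le_one)).const_mul K)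
  -- conclude by domination
  apply Integrable.mono' hg hfm.aestronglyMeasurable
  rw [ae_restrict_iff' measurableSet_Ioi]
  filter_upwards with s hs
  have hs1 : (1:ℝ) < s := hs
  have hs0 : (0:ℝ) < s := by linarith
  have hLB : (0:ℝ) < (2 * (n 1 : ℝ) + 2) * Real.exp (κ1 * s) * (C * s ^ N)⁻¹ * I := by
    positivity
  have hαs : 0 < α s := lt_of_lt_of_le hLB (hαlb s hs1)
  rw [Real.norm_eq_abs, abs_of_nonneg (one_div_nonneg.mpr (Real.sqrt_nonneg _))]
  have hsq : Real.sqrt ((2 * (n 1 : ℝ) + 2) * Real.exp (κ1 * s) * (C * s ^ N)⁻¹ * I)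
      ≤ Real.sqrt (α s) := Real.sqrt_le_sqrt (hαlb s hs1)
  have hsqpos : 0 < Real.sqrt ((2 * (n 1 : ℝ) + 2) * Real.exp (κ1 * s) * (C * s ^ N)⁻¹ * I) :=
    Real.sqrt_pos.mpr hLB
  calc 1 / Real.sqrt (α s)
      ≤ 1 / Real.sqrt ((2 * (n 1 : ℝ) + 2) * Real.exp (κ1 * s) * (C * s ^ N)⁻¹ * I) :=
        one_div_le_one_div_of_le hsqpos hsq
    _ = K * (s ^ ((N : ℝ) / 2) * Real.exp (-(κ1 / 2) * s)) := by
        rw [one_div, ← Real.sqrt_inv]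
        have h1 : s ^ ((N : ℝ) / 2) = Real.sqrt (s ^ N) := by
          rw [Real.sqrt_eq_rpow, ← Real.rpow_natCast s N, ← Real.rpow_mul hs0.le, mul_one_div]
        have h2 : Real.exp (-(κ1 / 2) * s) = Real.sqrt (Real.exp (-(κ1 * s))) := by
          rw [← Real.exp_half]
          ring_nf
        rw [hKdef, h1, h2, ← Real.sqrt_mul (by positivity), ← Real.sqrt_mul (by positivity)]
        congr 1
        rw [Real.exp_neg]
        have hsN : (0:ℝ) < s ^ N := by positivity
        field_simp
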